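/- arXiv:1302.0279 — 3 statements merged into one kernel-verified Lean document; each statement's English description precedes it below -/
import Mathlib

section
/- Let u = (u₁, 0, u₋₁) and v = (v₁, 0, v₋₁) be triples of nonnegative continuously differentiable functions ℝ³ → ℝ whose nonzero components and their gradients are in L²(ℝ³), whose nonzero components are in L⁴(ℝ³), and with ∫ V|u|² < ∞ and ∫ V|v|² < ∞. Define w = (w₁, 0, w₋₁) by w_j(x) = √((u_j(x)² + v_j(x)²)/2) for j = 1, −1. Then each w_j is differentiable on ℝ³ and ℰ_q[w] ≤ (ℰ_q[u] + ℰ_q[v])/2. -/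
open MeasureTheory
open scoped RealInnerProductSpace

noncomputable section

abbrev E3 := EuclideanSpace ℝ (Fin 3)

/-- Pointwise squared norm `|u|² = u₁² + u₀² + u₋₁²` of a triple of functions. -/
def nsq (u1 u0 um1 : E3 → ℝ) (x : E3) : ℝ := u1 x ^ 2 + u0 x ^ 2 + um1 x ^ 2

/-- The energy functional `ℰ_q[u]`. -/
def energy (V : E3 → ℝ) (βn βs q : ℝ) (u1 u0 um1 : E3 → ℝ) : ℝ :=
  ∫ x : E3,
    (‖gradient u1 x‖ ^ 2 + ‖gradient u0 x‖ ^ 2 + ‖gradient um1 x‖ ^ 2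
      + V x * nsq u1 u0 um1 x
      + βn * (nsq u1 u0 um1 x) ^ 2
      + βs * (2 * u0 x ^ 2 * (u1 x - um1 x) ^ 2 + (u1 x ^ 2 - um1 x ^ 2) ^ 2)
      + q * (u1 x ^ 2 + um1 x ^ 2))

/-- The admissible class `𝔸_M`: triples of nonnegative `C¹` functions with the
required integrability and the constraints `𝒩[u] = 1`, `ℳ[u] = M`. -/
structure Admissible (V : E3 → ℝ) (M : ℝ) (u1 u0 um1 : E3 → ℝ) : Prop where
  smooth1 : ContDiff ℝ 1 u1
  smooth0 : ContDiff ℝ 1 u0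
  smoothm1 : ContDiff ℝ 1 um1
  nonneg1 : ∀ x, 0 ≤ u1 x
  nonneg0 : ∀ x, 0 ≤ u0 x
  nonnegm1 : ∀ x, 0 ≤ um1 x
  l2_1 : Integrable (fun x => u1 x ^ 2)
  l2_0 : Integrable (fun x => u0 x ^ 2)
  l2_m1 : Integrable (fun x => um1 x ^ 2)
  grad2_1 : Integrable (fun x => ‖gradient u1 x‖ ^ 2)
  grad2_0 : Integrable (fun x => ‖gradient u0 x‖ ^ 2)
  grad2_m1 : Integrable (fun x => ‖gradient um1 x‖ ^ 2)
  l4_1 : Integrable (fun x => u1 x ^ 4)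
  l4_0 : Integrable (fun x => u0 x ^ 4)
  l4_m1 : Integrable (fun x => um1 x ^ 4)
  pot : Integrable (fun x => V x * nsq u1 u0 um1 x)
  mass : ∫ x : E3, nsq u1 u0 um1 x = 1
  magnetization : ∫ x : E3, (u1 x ^ 2 - um1 x ^ 2) = M

/-- Hypotheses on the trap potential `V`: measurable, nonnegative, locally bounded,
and tending to infinity at infinity. -/
structure TrapPotential (V : E3 → ℝ) : Prop where
  meas : Measurable V
  nonneg : ∀ x, 0 ≤ V x
  bddOnBalls : ∀ r : ℝ, ∃ C : ℝ, ∀ x : E3, ‖x‖ ≤ r → V x ≤ C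
  tendsToInfty : ∀ C : ℝ, 0 < C → ∃ R : ℝ, 0 < R ∧ ∀ x : E3, R ≤ ‖x‖ → C ≤ V x

/-- `u` is a ground state: admissible and minimizes the energy over `𝔸_M`. -/
def IsGroundState (V : E3 → ℝ) (βn βs q M : ℝ) (u1 u0 um1 : E3 → ℝ) : Prop :=
  Admissible V M u1 u0 um1 ∧
    ∀ v1 v0 vm1 : E3 → ℝ, Admissible V M v1 v0 vm1 →
      energy V βn βs q u1 u0 um1 ≤ energy V βn βs q v1 v0 vm1

open Asymptotics

lemma norm_gradient_eq (f : E3 → ℝ) (x : E3) : ‖gradient f x‖ = ‖fderiv ℝ f x‖ := by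
  rw [gradient]; exact (InnerProductSpace.toDual ℝ _).symm.norm_map _

lemma gradient_zero_fun (x : E3) : gradient (fun _ : E3 => (0:ℝ)) x = 0 := by
  simp [gradient]

lemma scalar_bound (p q a b s : ℝ) (hp : 0 ≤ p) (hq : 0 ≤ q) (ha : 0 ≤ a) (hb : 0 ≤ b)
    (hs : 0 < s) (hs2 : s ^ 2 = (p ^ 2 + q ^ 2) / 2) (X : ℝ) (hX : 0 ≤ X)
    (hXb : X ≤ 1 / (2 * s) * (p * a + q * b)) : X ^ 2 ≤ (a ^ 2 + b ^ 2) / 2 := by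
  have hP : 0 < p ^ 2 + q ^ 2 := by nlinarith
  have h1 : X ^ 2 ≤ (1 / (2 * s) * (p * a + q * b)) ^ 2 := pow_le_pow_left₀ hX hXb 2
  have h2 : (1 / (2 * s) * (p * a + q * b)) ^ 2 ≤ (a ^ 2 + b ^ 2) / 2 := by
    rw [mul_pow, div_pow, mul_pow, show (1:ℝ)^2 = 1 by norm_num, hs2,
      one_div, inv_mul_eq_div, div_le_div_iff₀ (by positivity) (by norm_num)]
    nlinarith [sq_nonneg (p * b - q * a)]
  linarith

lemma key_diff {u v : E3 → ℝ} (hu : ContDiff ℝ 1 u) (hv : ContDiff ℝ 1 v)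
    (hun : ∀ x, 0 ≤ u x) (hvn : ∀ x, 0 ≤ v x) (x : E3) :
    DifferentiableAt ℝ (fun y => Real.sqrt ((u y ^ 2 + v y ^ 2) / 2)) x ∧
    ‖fderiv ℝ (fun y => Real.sqrt ((u y ^ 2 + v y ^ 2) / 2)) x‖ ^ 2
      ≤ (‖fderiv ℝ u x‖ ^ 2 + ‖fderiv ℝ v x‖ ^ 2) / 2 := by
  have hud : DifferentiableAt ℝ u x := hu.differentiable one_ne_zero x
  have hvd : DifferentiableAt ℝ v x := hv.differentiable one_ne_zero x
  by_cases h0 : u x = 0 ∧ v x = 0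
  · obtain ⟨hux, hvx⟩ := h0
    have humin : IsLocalMin u x :=
      Filter.Eventually.of_forall fun y => by rw [hux]; exact hun y
    have hvmin : IsLocalMin v x :=
      Filter.Eventually.of_forall fun y => by rw [hvx]; exact hvn y
    have huF : HasFDerivAt u (0 : E3 →L[ℝ] ℝ) x := humin.fderiv_eq_zero ▸ hud.hasFDerivAt
    have hvF : HasFDerivAt v (0 : E3 →L[ℝ] ℝ) x := hvmin.fderiv_eq_zero ▸ hvd.hasFDerivAt
    have hulo : (fun h : E3 => u (x + h)) =o[nhds 0] fun h => h := by
      simpa [hux] using hasFDerivAt_iff_isLittleO_nhds_zero.mp huF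
    have hvlo : (fun h : E3 => v (x + h)) =o[nhds 0] fun h => h := by
      simpa [hvx] using hasFDerivAt_iff_isLittleO_nhds_zero.mp hvF
    have hsum := hulo.add hvlo
    have hbigO : (fun h : E3 => Real.sqrt ((u (x+h) ^ 2 + v (x+h) ^ 2) / 2))
        =O[nhds 0] fun h => u (x+h) + v (x+h) := by
      apply isBigO_of_le
      intro h
      have h1 : 0 ≤ u (x+h) := hun _
      have h2 : 0 ≤ v (x+h) := hvn _
      rw [Real.norm_eq_abs, Real.norm_eq_abs, abs_of_nonneg (Real.sqrt_nonneg _),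
        abs_of_nonneg (by linarith)]
      rw [show u (x+h) + v (x+h) = Real.sqrt ((u (x+h) + v (x+h))^2) by
        rw [Real.sqrt_sq (by linarith)]]
      exact Real.sqrt_le_sqrt (by nlinarith [mul_nonneg h1 h2])
    have hwF : HasFDerivAt (fun y => Real.sqrt ((u y ^ 2 + v y ^ 2) / 2))
        (0 : E3 →L[ℝ] ℝ) x := by
      rw [hasFDerivAt_iff_isLittleO_nhds_zero]
      simpa [hux, hvx] using hbigO.trans_isLittleO hsum
    refine ⟨hwF.differentiableAt, ?_⟩
    rw [hwF.fderiv]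
    simp
    positivity
  · have hpos : 0 < (u x ^ 2 + v x ^ 2) / 2 := by
      rcases not_and_or.mp h0 with h | h
      · have : 0 < u x ^ 2 := by positivity
        nlinarith [sq_nonneg (v x)]
      · have : 0 < v x ^ 2 := by positivity
        nlinarith [sq_nonneg (u x)]
    set s := Real.sqrt ((u x ^ 2 + v x ^ 2) / 2) with hs
    have hspos : 0 < s := Real.sqrt_pos.mpr hpos
    have hs2 : s ^ 2 = (u x ^ 2 + v x ^ 2) / 2 := Real.sq_sqrt hpos.le
    have hfF : HasFDerivAt (fun y => (u y ^ 2 + v y ^ 2) / 2)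
        (u x • fderiv ℝ u x + v x • fderiv ℝ v x) x := by
      have heq : (fun y => (u y ^ 2 + v y ^ 2) / 2)
          = fun y => (1/2 : ℝ) * (u y * u y + v y * v y) :=
        funext fun y => by ring
      rw [heq]
      have h := ((hud.hasFDerivAt.mul hud.hasFDerivAt).add
        (hvd.hasFDerivAt.mul hvd.hasFDerivAt)).const_mul ((1:ℝ)/2)
      refine HasFDerivAt.congr_fderiv h ?_
      ext y
      simp
      ring
    have hcomp := (Real.hasDerivAt_sqrt hpos.ne').comp_hasFDerivAt x hfF
    have hcomp' : HasFDerivAt (fun y => Real.sqrt ((u y ^ 2 + v y ^ 2) / 2))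
        ((1 / (2 * s)) • (u x • fderiv ℝ u x + v x • fderiv ℝ v x)) x := hcomp
    refine ⟨hcomp'.differentiableAt, ?_⟩
    rw [hcomp'.fderiv]
    have hbound : ‖(1 / (2 * s)) • (u x • fderiv ℝ u x + v x • fderiv ℝ v x)‖
        ≤ 1 / (2 * s) * (u x * ‖fderiv ℝ u x‖ + v x * ‖fderiv ℝ v x‖) := by
      rw [norm_smul]
      have h2 : ‖u x • fderiv ℝ u x + v x • fderiv ℝ v x‖
          ≤ u x * ‖fderiv ℝ u x‖ + v x * ‖fderiv ℝ v x‖ := by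
        refine (norm_add_le _ _).trans ?_
        rw [norm_smul, norm_smul, Real.norm_eq_abs, Real.norm_eq_abs,
          abs_of_nonneg (hun x), abs_of_nonneg (hvn x)]
      refine (mul_le_mul_of_nonneg_left h2 (norm_nonneg _)).trans ?_
      rw [Real.norm_eq_abs, abs_of_nonneg (by positivity)]
    exact scalar_bound (u x) (v x) ‖fderiv ℝ u x‖ ‖fderiv ℝ v x‖ s (hun x) (hvn x)
      (norm_nonneg _) (norm_nonneg _) hspos hs2 _ (norm_nonneg _) hbound

def GG (V : E3 → ℝ) (βn βs q : ℝ) (a b : E3 → ℝ) (x : E3) : ℝ :=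
  ‖gradient a x‖ ^ 2 + ‖gradient b x‖ ^ 2 + V x * (a x ^ 2 + b x ^ 2)
    + βn * (a x ^ 2 + b x ^ 2) ^ 2 + βs * (a x ^ 2 - b x ^ 2) ^ 2
    + q * (a x ^ 2 + b x ^ 2)

lemma energy_two (V : E3 → ℝ) (βn βs q : ℝ) (a b : E3 → ℝ) :
    energy V βn βs q a (fun _ => 0) b = ∫ x, GG V βn βs q a b x := by
  unfold energy GG nsq
  congr 1
  funext x
  simp [gradient_zero_fun]

lemma meas_gradsq (f : E3 → ℝ) : Measurable fun x => ‖gradient f x‖ ^ 2 := by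
  have h : (fun x => ‖gradient f x‖ ^ 2) = fun x => ‖fderiv ℝ f x‖ ^ 2 :=
    funext fun x => by rw [norm_gradient_eq]
  rw [h]
  exact ((measurable_fderiv ℝ f).norm).pow_const 2

lemma int_sq_add {a b : E3 → ℝ} (ha : Continuous a) (hb : Continuous b)
    (ha4 : Integrable (fun x => a x ^ 4)) (hb4 : Integrable (fun x => b x ^ 4)) :
    Integrable (fun x => (a x ^ 2 + b x ^ 2) ^ 2) := by
  refine Integrable.mono' ((ha4.add hb4).const_mul 2)
    (((ha.pow 2).add (hb.pow 2)).pow 2).aestronglyMeasurable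
    (ae_of_all _ fun x => ?_)
  rw [Real.norm_eq_abs, abs_of_nonneg (by positivity)]
  simp only [Pi.add_apply]
  nlinarith [sq_nonneg (a x ^ 2 - b x ^ 2)]

lemma int_sq_sub {a b : E3 → ℝ} (ha : Continuous a) (hb : Continuous b)
    (ha4 : Integrable (fun x => a x ^ 4)) (hb4 : Integrable (fun x => b x ^ 4)) :
    Integrable (fun x => (a x ^ 2 - b x ^ 2) ^ 2) := by
  refine Integrable.mono' ((ha4.add hb4).const_mul 2)
    (((ha.pow 2).sub (hb.pow 2)).pow 2).aestronglyMeasurable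
    (ae_of_all _ fun x => ?_)
  rw [Real.norm_eq_abs, abs_of_nonneg (by positivity)]
  simp only [Pi.add_apply]
  nlinarith [sq_nonneg (a x ^ 2 + b x ^ 2)]

lemma int_GG (V : E3 → ℝ) (βn βs q : ℝ) (a b : E3 → ℝ)
    (ha : Continuous a) (hb : Continuous b)
    (hag : Integrable (fun x => ‖gradient a x‖ ^ 2))
    (hbg : Integrable (fun x => ‖gradient b x‖ ^ 2))
    (hal2 : Integrable (fun x => a x ^ 2)) (hbl2 : Integrable (fun x => b x ^ 2))
    (ha4 : Integrable (fun x => a x ^ 4)) (hb4 : Integrable (fun x => b x ^ 4))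
    (hpot : Integrable (fun x => V x * (a x ^ 2 + b x ^ 2))) :
    Integrable (GG V βn βs q a b) := by
  unfold GG
  exact ((((hag.add hbg).add hpot).add ((int_sq_add ha hb ha4 hb4).const_mul βn)).add
    ((int_sq_sub ha hb ha4 hb4).const_mul βs)).add ((hal2.add hbl2).const_mul q)

/-- convexity of the energy on two-component states. -/
theorem two_component_convexity (V : E3 → ℝ) (βn βs q : ℝ)
    (hV : TrapPotential V) (hβn : 0 < βn) (hβs : 0 < βs) (hq : 0 ≤ q)
    (u1 um1 v1 vm1 : E3 → ℝ)
    (hu1 : ContDiff ℝ 1 u1) (hum1 : ContDiff ℝ 1 um1)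
    (hv1 : ContDiff ℝ 1 v1) (hvm1 : ContDiff ℝ 1 vm1)
    (hu1n : ∀ x, 0 ≤ u1 x) (hum1n : ∀ x, 0 ≤ um1 x)
    (hv1n : ∀ x, 0 ≤ v1 x) (hvm1n : ∀ x, 0 ≤ vm1 x)
    (hu1l2 : Integrable (fun x => u1 x ^ 2)) (hum1l2 : Integrable (fun x => um1 x ^ 2))
    (hv1l2 : Integrable (fun x => v1 x ^ 2)) (hvm1l2 : Integrable (fun x => vm1 x ^ 2))
    (hu1g : Integrable (fun x => ‖gradient u1 x‖ ^ 2))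
    (hum1g : Integrable (fun x => ‖gradient um1 x‖ ^ 2))
    (hv1g : Integrable (fun x => ‖gradient v1 x‖ ^ 2))
    (hvm1g : Integrable (fun x => ‖gradient vm1 x‖ ^ 2))
    (hu1l4 : Integrable (fun x => u1 x ^ 4)) (hum1l4 : Integrable (fun x => um1 x ^ 4))
    (hv1l4 : Integrable (fun x => v1 x ^ 4)) (hvm1l4 : Integrable (fun x => vm1 x ^ 4))
    (hupot : Integrable (fun x => V x * (u1 x ^ 2 + um1 x ^ 2)))
    (hvpot : Integrable (fun x => V x * (v1 x ^ 2 + vm1 x ^ 2))) :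
    (∀ x : E3, DifferentiableAt ℝ (fun y => Real.sqrt ((u1 y ^ 2 + v1 y ^ 2) / 2)) x) ∧
    (∀ x : E3, DifferentiableAt ℝ (fun y => Real.sqrt ((um1 y ^ 2 + vm1 y ^ 2) / 2)) x) ∧
    energy V βn βs q (fun y => Real.sqrt ((u1 y ^ 2 + v1 y ^ 2) / 2)) (fun _ => 0)
        (fun y => Real.sqrt ((um1 y ^ 2 + vm1 y ^ 2) / 2))
      ≤ (energy V βn βs q u1 (fun _ => 0) um1 + energy V βn βs q v1 (fun _ => 0) vm1) / 2 := by
  set w1 : E3 → ℝ := fun y => Real.sqrt ((u1 y ^ 2 + v1 y ^ 2) / 2) with hw1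
  set wm1 : E3 → ℝ := fun y => Real.sqrt ((um1 y ^ 2 + vm1 y ^ 2) / 2) with hwm1
  refine ⟨fun x => (key_diff hu1 hv1 hu1n hv1n x).1,
    fun x => (key_diff hum1 hvm1 hum1n hvm1n x).1, ?_⟩
  have hw1c : Continuous w1 :=
    Real.continuous_sqrt.comp (((hu1.continuous.pow 2).add (hv1.continuous.pow 2)).div_const 2)
  have hwm1c : Continuous wm1 :=
    Real.continuous_sqrt.comp (((hum1.continuous.pow 2).add (hvm1.continuous.pow 2)).div_const 2)
  have hint_u : Integrable (GG V βn βs q u1 um1) :=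
    int_GG V βn βs q u1 um1 hu1.continuous hum1.continuous hu1g hum1g hu1l2 hum1l2
      hu1l4 hum1l4 hupot
  have hint_v : Integrable (GG V βn βs q v1 vm1) :=
    int_GG V βn βs q v1 vm1 hv1.continuous hvm1.continuous hv1g hvm1g hv1l2 hvm1l2
      hv1l4 hvm1l4 hvpot
  have hmeas : AEStronglyMeasurable (GG V βn βs q w1 wm1) volume := by
    unfold GG
    refine Measurable.aestronglyMeasurable ?_
    refine ((((( (meas_gradsq w1).add (meas_gradsq wm1)).add
      (hV.meas.mul ((hw1c.measurable.pow_const 2).add (hwm1c.measurable.pow_const 2)))).add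
      ((((hw1c.measurable.pow_const 2).add (hwm1c.measurable.pow_const 2)).pow_const 2).const_mul βn)).add
      ((((hw1c.measurable.pow_const 2).sub (hwm1c.measurable.pow_const 2)).pow_const 2).const_mul βs)).add
      (((hw1c.measurable.pow_const 2).add (hwm1c.measurable.pow_const 2)).const_mul q))
  have hsq1 : ∀ x, w1 x ^ 2 = (u1 x ^ 2 + v1 x ^ 2) / 2 :=
    fun x => Real.sq_sqrt (by positivity)
  have hsqm : ∀ x, wm1 x ^ 2 = (um1 x ^ 2 + vm1 x ^ 2) / 2 :=
    fun x => Real.sq_sqrt (by positivity)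
  have hpt : ∀ x, GG V βn βs q w1 wm1 x
      ≤ (GG V βn βs q u1 um1 x + GG V βn βs q v1 vm1 x) / 2 := by
    intro x
    have g1 : ‖gradient w1 x‖ ^ 2 ≤ (‖gradient u1 x‖ ^ 2 + ‖gradient v1 x‖ ^ 2) / 2 := by
      rw [norm_gradient_eq, norm_gradient_eq, norm_gradient_eq]
      exact (key_diff hu1 hv1 hu1n hv1n x).2
    have gm : ‖gradient wm1 x‖ ^ 2 ≤ (‖gradient um1 x‖ ^ 2 + ‖gradient vm1 x‖ ^ 2) / 2 := by
      rw [norm_gradient_eq, norm_gradient_eq, norm_gradient_eq]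
      exact (key_diff hum1 hvm1 hum1n hvm1n x).2
    unfold GG
    rw [hsq1 x, hsqm x]
    nlinarith [g1, gm, hV.nonneg x,
      mul_nonneg hβn.le (sq_nonneg ((u1 x ^ 2 + um1 x ^ 2) - (v1 x ^ 2 + vm1 x ^ 2))),
      mul_nonneg hβs.le (sq_nonneg ((u1 x ^ 2 - um1 x ^ 2) - (v1 x ^ 2 - vm1 x ^ 2)))]
  have hpt0 : ∀ x, 0 ≤ GG V βn βs q w1 wm1 x := by
    intro x
    unfold GG
    refine add_nonneg (add_nonneg (add_nonneg (add_nonneg (add_nonneg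
      (by positivity) (by positivity)) (mul_nonneg (hV.nonneg x) (by positivity)))
      (mul_nonneg hβn.le (sq_nonneg _))) (mul_nonneg hβs.le (sq_nonneg _)))
      (mul_nonneg hq (by positivity))
  have hhalf : Integrable (fun x => (GG V βn βs q u1 um1 x + GG V βn βs q v1 vm1 x) / 2) :=
    (hint_u.add hint_v).div_const 2
  have hint_w : Integrable (GG V βn βs q w1 wm1) := by
    refine hhalf.mono' hmeas (ae_of_all _ fun x => ?_)
    rw [Real.norm_eq_abs, abs_of_nonneg (hpt0 x)]
    exact hpt x
  calc energy V βn βs q w1 (fun _ => 0) wm1 = ∫ x, GG V βn βs q w1 wm1 x :=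
        energy_two V βn βs q w1 wm1
    _ ≤ ∫ x, (GG V βn βs q u1 um1 x + GG V βn βs q v1 vm1 x) / 2 :=
        integral_mono hint_w hhalf hpt
    _ = ((∫ x, GG V βn βs q u1 um1 x) + ∫ x, GG V βn βs q v1 vm1 x) / 2 := by
        rw [integral_div, integral_add hint_u hint_v]
    _ = (energy V βn βs q u1 (fun _ => 0) um1 + energy V βn βs q v1 (fun _ => 0) vm1) / 2 := by
        rw [energy_two, energy_two]
end
end

section
/- Fix M ∈ [0,1]. The function q ↦ E_g(M, q) is nondecreasing on [0, ∞) and satisfies the Lipschitz bound |E_g(M, q₁) − E_g(M, q₂)| ≤ |q₁ − q₂| for all q₁, q₂ ≥ 0; moreover, if 0 < M ≤ 1 then it is strictly increasing on [0, ∞). -/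
open MeasureTheory
open scoped RealInnerProductSpace

noncomputable section

/-- The ground-state energy `E_g(M,q) = inf {ℰ_q[u] : u ∈ 𝔸_M}`. -/
def groundEnergy (V : E3 → ℝ) (βn βs q M : ℝ) : ℝ :=
  sInf {E : ℝ | ∃ u1 u0 um1 : E3 → ℝ, Admissible V M u1 u0 um1 ∧
    energy V βn βs q u1 u0 um1 = E}

/-! ### Auxiliary lemmas -/

/-- The full energy integrand is integrable for an admissible triple. -/
lemma adm_integrand_integrable {V : E3 → ℝ} {M : ℝ} {u1 u0 um1 : E3 → ℝ}
    (h : Admissible V M u1 u0 um1) (βn βs q : ℝ) :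
    Integrable (fun x : E3 => ‖gradient u1 x‖ ^ 2 + ‖gradient u0 x‖ ^ 2 + ‖gradient um1 x‖ ^ 2
      + V x * nsq u1 u0 um1 x
      + βn * (nsq u1 u0 um1 x) ^ 2
      + βs * (2 * u0 x ^ 2 * (u1 x - um1 x) ^ 2 + (u1 x ^ 2 - um1 x ^ 2) ^ 2)
      + q * (u1 x ^ 2 + um1 x ^ 2)) := by
  have hc1 : Continuous u1 := h.smooth1.continuous
  have hc0 : Continuous u0 := h.smooth0.continuous
  have hcm1 : Continuous um1 := h.smoothm1.continuous
  have h4 : Integrable (fun x : E3 => u1 x ^ 4 + u0 x ^ 4 + um1 x ^ 4) :=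
    (h.l4_1.add h.l4_0).add h.l4_m1
  have hnsq2 : Integrable (fun x : E3 => (nsq u1 u0 um1 x) ^ 2) := by
    refine Integrable.mono (h4.const_mul 3) ?_ ?_
    · exact (((((hc1.pow 2).add (hc0.pow 2)).add (hcm1.pow 2))).pow 2).aestronglyMeasurable
    · refine Filter.Eventually.of_forall fun x => ?_
      have hb : (nsq u1 u0 um1 x) ^ 2 ≤ 3 * (u1 x ^ 4 + u0 x ^ 4 + um1 x ^ 4) := by
        simp only [nsq]
        nlinarith [sq_nonneg (u1 x ^ 2 - u0 x ^ 2), sq_nonneg (u0 x ^ 2 - um1 x ^ 2),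
          sq_nonneg (u1 x ^ 2 - um1 x ^ 2)]
      have h0 : (0:ℝ) ≤ (nsq u1 u0 um1 x) ^ 2 := sq_nonneg _
      calc ‖(nsq u1 u0 um1 x) ^ 2‖ = (nsq u1 u0 um1 x) ^ 2 := by
              rw [Real.norm_eq_abs, abs_of_nonneg h0]
        _ ≤ 3 * (u1 x ^ 4 + u0 x ^ 4 + um1 x ^ 4) := hb
        _ ≤ ‖3 * (u1 x ^ 4 + u0 x ^ 4 + um1 x ^ 4)‖ := le_abs_self _
  have hbs : Integrable
      (fun x : E3 => 2 * u0 x ^ 2 * (u1 x - um1 x) ^ 2 + (u1 x ^ 2 - um1 x ^ 2) ^ 2) := by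
    refine Integrable.mono (h4.const_mul 6) ?_ ?_
    · exact (((continuous_const.mul (hc0.pow 2)).mul ((hc1.sub hcm1).pow 2)).add
        (((hc1.pow 2).sub (hcm1.pow 2)).pow 2)).aestronglyMeasurable
    · refine Filter.Eventually.of_forall fun x => ?_
      have h0 : (0:ℝ) ≤ 2 * u0 x ^ 2 * (u1 x - um1 x) ^ 2 + (u1 x ^ 2 - um1 x ^ 2) ^ 2 := by
        positivity
      have hb : 2 * u0 x ^ 2 * (u1 x - um1 x) ^ 2 + (u1 x ^ 2 - um1 x ^ 2) ^ 2
          ≤ 6 * (u1 x ^ 4 + u0 x ^ 4 + um1 x ^ 4) := by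
        nlinarith [sq_nonneg (u1 x * u0 x - u0 x * um1 x), sq_nonneg (u1 x * u0 x + u0 x * um1 x),
          sq_nonneg (u1 x ^ 2 - u0 x ^ 2), sq_nonneg (u0 x ^ 2 - um1 x ^ 2),
          sq_nonneg (u1 x ^ 2 - um1 x ^ 2), sq_nonneg (u1 x ^ 2 + um1 x ^ 2)]
      calc ‖2 * u0 x ^ 2 * (u1 x - um1 x) ^ 2 + (u1 x ^ 2 - um1 x ^ 2) ^ 2‖
            = 2 * u0 x ^ 2 * (u1 x - um1 x) ^ 2 + (u1 x ^ 2 - um1 x ^ 2) ^ 2 := by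
              rw [Real.norm_eq_abs, abs_of_nonneg h0]
        _ ≤ 6 * (u1 x ^ 4 + u0 x ^ 4 + um1 x ^ 4) := hb
        _ ≤ ‖6 * (u1 x ^ 4 + u0 x ^ 4 + um1 x ^ 4)‖ := le_abs_self _
  exact ((((((h.grad2_1.add h.grad2_0).add h.grad2_m1).add h.pot).add
    (hnsq2.const_mul βn)).add (hbs.const_mul βs)).add ((h.l2_1.add h.l2_m1).const_mul q))

/-- The energy at two values of `q` differ by `(q₂ - q₁) ∫ (u₁² + u₋₁²)`. -/
lemma energy_eq {V : E3 → ℝ} {M : ℝ} {u1 u0 um1 : E3 → ℝ}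
    (h : Admissible V M u1 u0 um1) (βn βs q1 q2 : ℝ) :
    energy V βn βs q2 u1 u0 um1
      = energy V βn βs q1 u1 u0 um1 + (q2 - q1) * ∫ x : E3, (u1 x ^ 2 + um1 x ^ 2) := by
  have hF := adm_integrand_integrable h βn βs q1
  have hg : Integrable (fun x : E3 => u1 x ^ 2 + um1 x ^ 2) := h.l2_1.add h.l2_m1
  simp only [energy]
  rw [← integral_const_mul, ← integral_add hF (hg.const_mul (q2 - q1))]
  refine integral_congr_ae (Filter.Eventually.of_forall fun x => ?_)
  ring

/-- `M ≤ ∫ (u₁² + u₋₁²) ≤ 1` for an admissible triple. -/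
lemma mass_bounds {V : E3 → ℝ} {M : ℝ} {u1 u0 um1 : E3 → ℝ}
    (h : Admissible V M u1 u0 um1) :
    M ≤ (∫ x : E3, (u1 x ^ 2 + um1 x ^ 2)) ∧ (∫ x : E3, (u1 x ^ 2 + um1 x ^ 2)) ≤ 1 := by
  have hmag := h.magnetization
  have hmass := h.mass
  rw [integral_sub h.l2_1 h.l2_m1] at hmag
  simp only [nsq] at hmass
  have h10 : Integrable (fun x : E3 => u1 x ^ 2 + u0 x ^ 2) := h.l2_1.add h.l2_0
  rw [integral_add h10 h.l2_m1, integral_add h.l2_1 h.l2_0] at hmass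
  rw [integral_add h.l2_1 h.l2_m1]
  have h0 : 0 ≤ ∫ x : E3, u0 x ^ 2 := integral_nonneg fun x => sq_nonneg _
  have hm1 : 0 ≤ ∫ x : E3, um1 x ^ 2 := integral_nonneg fun x => sq_nonneg _
  constructor <;> linarith

/-- The energy is nonnegative for nonnegative parameters. -/
lemma energy_nonneg {V : E3 → ℝ} {βn βs q : ℝ} (hV : TrapPotential V)
    (hβn : 0 ≤ βn) (hβs : 0 ≤ βs) (hq : 0 ≤ q) (u1 u0 um1 : E3 → ℝ) :
    0 ≤ energy V βn βs q u1 u0 um1 := by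
  refine integral_nonneg fun x => ?_
  show (0:ℝ) ≤ _
  have hn : 0 ≤ nsq u1 u0 um1 x := by unfold nsq; positivity
  have h1 : 0 ≤ V x * nsq u1 u0 um1 x := mul_nonneg (hV.nonneg x) hn
  have h2 : 0 ≤ βn * (nsq u1 u0 um1 x) ^ 2 := mul_nonneg hβn (sq_nonneg _)
  have h3 : 0 ≤ βs * (2 * u0 x ^ 2 * (u1 x - um1 x) ^ 2 + (u1 x ^ 2 - um1 x ^ 2) ^ 2) :=
    mul_nonneg hβs (by positivity)
  have h4 : 0 ≤ q * (u1 x ^ 2 + um1 x ^ 2) := mul_nonneg hq (by positivity)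
  have h5 : 0 ≤ ‖gradient u1 x‖ ^ 2 := sq_nonneg _
  have h6 : 0 ≤ ‖gradient u0 x‖ ^ 2 := sq_nonneg _
  have h7 : 0 ≤ ‖gradient um1 x‖ ^ 2 := sq_nonneg _
  linarith

lemma integrable_grad_sq {g : E3 → ℝ} (hg : ContDiff ℝ 1 g) (hcs : HasCompactSupport g) :
    Integrable (fun x : E3 => ‖gradient g x‖ ^ 2) := by
  have hfd : Continuous (fderiv ℝ g) := hg.continuous_fderiv one_ne_zero
  have hgc : Continuous (gradient g) :=
    (InnerProductSpace.toDual ℝ E3).symm.continuous.comp hfd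
  have hgs : HasCompactSupport (gradient g) :=
    (hcs.fderiv ℝ).comp_left (g := fun L => (InnerProductSpace.toDual ℝ E3).symm L) (map_zero _)
  have hgs2 : HasCompactSupport (fun x : E3 => ‖gradient g x‖ ^ 2) :=
    hgs.comp_left (g := fun v => ‖v‖ ^ 2) (by simp)
  exact (hgc.norm.pow 2).integrable_of_hasCompactSupport hgs2

/-- A fixed bump function. -/
def bump : ContDiffBump (0 : E3) := ⟨1, 2, one_pos, one_lt_two⟩

lemma exists_admissible {V : E3 → ℝ} {M : ℝ} (hV : TrapPotential V)
    (hM0 : 0 ≤ M) (hM1 : M ≤ 1) :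
    ∃ u1 u0 um1 : E3 → ℝ, Admissible V M u1 u0 um1 := by
  set f : ContDiffBump (0 : E3) := bump with hfdef
  have hrIn : f.rIn = 1 := rfl
  set φ : E3 → ℝ := ⇑f with hφdef
  have hφc : Continuous φ := f.continuous
  have hφcs : HasCompactSupport φ := f.hasCompactSupport
  have hφsm : ContDiff ℝ 1 φ := by exact_mod_cast f.contDiff (n := 1)
  have hφnn : ∀ x, 0 ≤ φ x := f.nonneg'
  set c0 : ℝ := ∫ x : E3, φ x ^ 2 with hc0def
  have hφ2cs : HasCompactSupport (fun x : E3 => φ x ^ 2) := hφcs.comp_left (g := fun t => t ^ 2) (by simp)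
  have hφ2int : Integrable (fun x : E3 => φ x ^ 2) :=
    (hφc.pow 2).integrable_of_hasCompactSupport hφ2cs
  have hc0 : 0 < c0 := by
    have hms : MeasurableSet (Metric.closedBall (0:E3) 1) := measurableSet_closedBall
    have hindint : Integrable ((Metric.closedBall (0:E3) 1).indicator fun _ => (1:ℝ)) := by
      rw [integrable_indicator_iff hms]
      exact integrableOn_const measure_closedBall_lt_top.ne
    have hle : ((Metric.closedBall (0:E3) 1).indicator fun _ => (1:ℝ)) ≤ fun x => φ x ^ 2 := by
      intro x
      by_cases hx : x ∈ Metric.closedBall (0:E3) 1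
      · rw [Set.indicator_of_mem hx]
        have hone : φ x = 1 := f.one_of_mem_closedBall (by rw [hrIn]; exact hx)
        show (1:ℝ) ≤ φ x ^ 2
        rw [hone]; norm_num
      · rw [Set.indicator_of_notMem hx]; positivity
    have hint := integral_mono hindint hφ2int hle
    rw [integral_indicator_const (1:ℝ) hms] at hint
    have hpos : 0 < (volume (Metric.closedBall (0:E3) 1)).toReal :=
      ENNReal.toReal_pos (Metric.measure_closedBall_pos volume 0 one_pos).ne'
        measure_closedBall_lt_top.ne
    simp only [smul_eq_mul, mul_one] at hint
    exact lt_of_lt_of_le hpos hint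
  have hc0' : c0 ≠ 0 := hc0.ne'
  set a : ℝ := Real.sqrt ((1 + M) / (2 * c0)) with hadef
  set b : ℝ := Real.sqrt ((1 - M) / (2 * c0)) with hbdef
  have ha2 : a ^ 2 = (1 + M) / (2 * c0) :=
    Real.sq_sqrt (div_nonneg (by linarith) (by linarith))
  have hb2 : b ^ 2 = (1 - M) / (2 * c0) :=
    Real.sq_sqrt (div_nonneg (by linarith) (by linarith))
  have ha0 : 0 ≤ a := Real.sqrt_nonneg _
  have hb0 : 0 ≤ b := Real.sqrt_nonneg _
  refine ⟨fun x => a * φ x, fun _ => 0, fun x => b * φ x, ?_⟩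
  -- compact support of scaled functions
  have hacs : HasCompactSupport (fun x => a * φ x) :=
    hφcs.comp_left (g := fun t => a * t) (mul_zero a)
  have hbcs : HasCompactSupport (fun x => b * φ x) :=
    hφcs.comp_left (g := fun t => b * t) (mul_zero b)
  have hac : Continuous (fun x => a * φ x) := continuous_const.mul hφc
  have hbc : Continuous (fun x => b * φ x) := continuous_const.mul hφc
  -- integrability of powers
  have hpow : ∀ (c : ℝ) (n : ℕ), n ≠ 0 → HasCompactSupport (fun x => c * φ x) →
      Continuous (fun x => c * φ x) → Integrable (fun x : E3 => (c * φ x) ^ n) := by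
    intro c n hn hcs hc
    exact (hc.pow n).integrable_of_hasCompactSupport
      (hcs.comp_left (g := fun t => t ^ n) (zero_pow hn))
  -- nsq rewrite
  have hnsqeq : ∀ x, nsq (fun x => a * φ x) (fun _ => 0) (fun x => b * φ x) x
      = (a ^ 2 + b ^ 2) * φ x ^ 2 := by
    intro x; simp only [nsq]; ring
  have hzero2 : Integrable (fun x : E3 => ((fun _ : E3 => (0:ℝ)) x) ^ 2) := by
    simpa using (integrable_zero E3 ℝ (volume : Measure E3))
  have hzero4 : Integrable (fun x : E3 => ((fun _ : E3 => (0:ℝ)) x) ^ 4) := by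
    simpa using (integrable_zero E3 ℝ (volume : Measure E3))
  have hgradzero : Integrable (fun x : E3 => ‖gradient (fun _ : E3 => (0:ℝ)) x‖ ^ 2) := by
    have : (fun x : E3 => ‖gradient (fun _ : E3 => (0:ℝ)) x‖ ^ 2) = fun _ => 0 := by
      funext x; rw [gradient_fun_const]; simp
    rw [this]; exact integrable_zero E3 ℝ (volume : Measure E3)
  have hnsqint : Integrable (fun x : E3 => (a ^ 2 + b ^ 2) * φ x ^ 2) :=
    hφ2int.const_mul _
  -- potential term
  obtain ⟨r, hr⟩ := hφcs.isBounded.subset_closedBall 0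
  obtain ⟨C, hC⟩ := hV.bddOnBalls r
  have hVnsq : Integrable (fun x : E3 =>
      V x * nsq (fun x => a * φ x) (fun _ => 0) (fun x => b * φ x) x) := by
    refine Integrable.mono (hnsqint.const_mul (max C 0)) ?_ ?_
    · refine (hV.meas.mul ?_).aestronglyMeasurable
      have : Continuous (fun x : E3 => nsq (fun x => a * φ x) (fun _ => 0) (fun x => b * φ x) x) := by
        simp only [hnsqeq]; exact continuous_const.mul (hφc.pow 2)
      exact this.measurable
    · refine Filter.Eventually.of_forall fun x => ?_
      have hnn : 0 ≤ nsq (fun x => a * φ x) (fun _ => 0) (fun x => b * φ x) x := by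
        rw [hnsqeq]; positivity
      by_cases hx : ‖x‖ ≤ r
      · have hVx := hC x hx
        have : ‖V x * nsq (fun x => a * φ x) (fun _ => 0) (fun x => b * φ x) x‖
            = V x * nsq (fun x => a * φ x) (fun _ => 0) (fun x => b * φ x) x := by
          rw [Real.norm_eq_abs, abs_of_nonneg (mul_nonneg (hV.nonneg x) hnn)]
        rw [this, hnsqeq]
        calc V x * ((a ^ 2 + b ^ 2) * φ x ^ 2)
            ≤ max C 0 * ((a ^ 2 + b ^ 2) * φ x ^ 2) := by
              refine mul_le_mul_of_nonneg_right ?_ (by positivity)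
              exact le_max_of_le_left hVx
          _ ≤ ‖max C 0 * ((a ^ 2 + b ^ 2) * φ x ^ 2)‖ := le_abs_self _
      · have hφ0 : φ x = 0 := by
          apply image_eq_zero_of_notMem_tsupport
          intro hmem
          exact hx (by simpa using Metric.mem_closedBall.mp (hr hmem))
        rw [hnsqeq, hφ0]
        simp
  constructor
  case smooth1 => exact contDiff_const.mul hφsm
  case smooth0 => exact contDiff_const
  case smoothm1 => exact contDiff_const.mul hφsm
  case nonneg1 => exact fun x => mul_nonneg ha0 (hφnn x)
  case nonneg0 => exact fun _ => le_rfl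
  case nonnegm1 => exact fun x => mul_nonneg hb0 (hφnn x)
  case l2_1 => exact hpow a 2 (by norm_num) hacs hac
  case l2_0 => exact hzero2
  case l2_m1 => exact hpow b 2 (by norm_num) hbcs hbc
  case grad2_1 => exact integrable_grad_sq (contDiff_const.mul hφsm) hacs
  case grad2_0 => exact hgradzero
  case grad2_m1 => exact integrable_grad_sq (contDiff_const.mul hφsm) hbcs
  case l4_1 => exact hpow a 4 (by norm_num) hacs hac
  case l4_0 => exact hzero4
  case l4_m1 => exact hpow b 4 (by norm_num) hbcs hbc
  case pot => exact hVnsq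
  case mass =>
    have hfun : (fun x : E3 => nsq (fun x => a * φ x) (fun _ => 0) (fun x => b * φ x) x)
        = fun x => (a ^ 2 + b ^ 2) * φ x ^ 2 := funext hnsqeq
    have hab : a ^ 2 + b ^ 2 = 1 / c0 := by
      rw [ha2, hb2, ← add_div]
      have h2 : 1 + M + (1 - M) = 2 := by ring
      rw [h2]
      field_simp
    rw [hfun, integral_const_mul, ← hc0def, hab]
    exact one_div_mul_cancel hc0'
  case magnetization =>
    have hfun : (fun x : E3 => ((fun x => a * φ x) x) ^ 2 - ((fun x => b * φ x) x) ^ 2)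
        = fun x => (a ^ 2 - b ^ 2) * φ x ^ 2 := by funext x; ring
    have hab : a ^ 2 - b ^ 2 = M / c0 := by
      rw [ha2, hb2, div_sub_div_same]
      have h2 : 1 + M - (1 - M) = 2 * M := by ring
      rw [h2]
      field_simp
    rw [hfun, integral_const_mul, ← hc0def, hab]
    exact div_mul_cancel₀ M hc0'

/-- Key comparison between ground energies at different `q`. -/
lemma groundEnergy_key {V : E3 → ℝ} {βn βs M : ℝ} (hV : TrapPotential V)
    (hβn : 0 < βn) (hβs : 0 < βs) (hM0 : 0 ≤ M) (hM1 : M ≤ 1)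
    {q1 q2 : ℝ} (hq1 : 0 ≤ q1) (hle : q1 ≤ q2) :
    groundEnergy V βn βs q1 M + M * (q2 - q1) ≤ groundEnergy V βn βs q2 M ∧
    groundEnergy V βn βs q2 M ≤ groundEnergy V βn βs q1 M + (q2 - q1) := by
  have hq2 : 0 ≤ q2 := hq1.trans hle
  obtain ⟨w1, w0, wm1, hw⟩ := exists_admissible hV hM0 hM1
  have hne1 : Set.Nonempty {E : ℝ | ∃ u1 u0 um1 : E3 → ℝ, Admissible V M u1 u0 um1 ∧
      energy V βn βs q1 u1 u0 um1 = E} := ⟨_, w1, w0, wm1, hw, rfl⟩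
  have hne2 : Set.Nonempty {E : ℝ | ∃ u1 u0 um1 : E3 → ℝ, Admissible V M u1 u0 um1 ∧
      energy V βn βs q2 u1 u0 um1 = E} := ⟨_, w1, w0, wm1, hw, rfl⟩
  have hbdd1 : BddBelow {E : ℝ | ∃ u1 u0 um1 : E3 → ℝ, Admissible V M u1 u0 um1 ∧
      energy V βn βs q1 u1 u0 um1 = E} := by
    refine ⟨0, ?_⟩
    rintro E ⟨u1, u0, um1, _, rfl⟩
    exact energy_nonneg hV hβn.le hβs.le hq1 u1 u0 um1
  have hbdd2 : BddBelow {E : ℝ | ∃ u1 u0 um1 : E3 → ℝ, Admissible V M u1 u0 um1 ∧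
      energy V βn βs q2 u1 u0 um1 = E} := by
    refine ⟨0, ?_⟩
    rintro E ⟨u1, u0, um1, _, rfl⟩
    exact energy_nonneg hV hβn.le hβs.le hq2 u1 u0 um1
  simp only [groundEnergy]
  constructor
  · -- lower bound for groundEnergy at q2
    refine le_csInf hne2 ?_
    rintro E ⟨u1, u0, um1, ha, rfl⟩
    have hE1 : sInf {E : ℝ | ∃ u1 u0 um1 : E3 → ℝ, Admissible V M u1 u0 um1 ∧
        energy V βn βs q1 u1 u0 um1 = E} ≤ energy V βn βs q1 u1 u0 um1 :=
      csInf_le hbdd1 ⟨u1, u0, um1, ha, rfl⟩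
    have hI := mass_bounds ha
    have heq := energy_eq ha βn βs q1 q2
    have hmul : M * (q2 - q1) ≤ (q2 - q1) * ∫ x : E3, (u1 x ^ 2 + um1 x ^ 2) := by
      rw [mul_comm]
      exact mul_le_mul_of_nonneg_left hI.1 (by linarith)
    linarith
  · -- upper bound for groundEnergy at q2
    have key : sInf {E : ℝ | ∃ u1 u0 um1 : E3 → ℝ, Admissible V M u1 u0 um1 ∧
        energy V βn βs q2 u1 u0 um1 = E} - (q2 - q1)
        ≤ sInf {E : ℝ | ∃ u1 u0 um1 : E3 → ℝ, Admissible V M u1 u0 um1 ∧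
        energy V βn βs q1 u1 u0 um1 = E} := by
      refine le_csInf hne1 ?_
      rintro E ⟨u1, u0, um1, ha, rfl⟩
      have hE2 : sInf {E : ℝ | ∃ u1 u0 um1 : E3 → ℝ, Admissible V M u1 u0 um1 ∧
          energy V βn βs q2 u1 u0 um1 = E} ≤ energy V βn βs q2 u1 u0 um1 :=
        csInf_le hbdd2 ⟨u1, u0, um1, ha, rfl⟩
      have hI := mass_bounds ha
      have heq := energy_eq ha βn βs q1 q2
      have hmul : (q2 - q1) * (∫ x : E3, (u1 x ^ 2 + um1 x ^ 2)) ≤ (q2 - q1) * 1 :=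
        mul_le_mul_of_nonneg_left hI.2 (by linarith)
      linarith
    linarith

/-- in `q`, the ground-state energy is nondecreasing, `1`-Lipschitz,
and strictly increasing when `0 < M ≤ 1`. -/
theorem groundEnergy_monotone_lipschitz_in_q (V : E3 → ℝ) (βn βs M : ℝ)
    (hV : TrapPotential V) (hβn : 0 < βn) (hβs : 0 < βs)
    (hM0 : 0 ≤ M) (hM1 : M ≤ 1) :
    (∀ q1 q2 : ℝ, 0 ≤ q1 → q1 ≤ q2 →
      groundEnergy V βn βs q1 M ≤ groundEnergy V βn βs q2 M) ∧
    (∀ q1 q2 : ℝ, 0 ≤ q1 → 0 ≤ q2 →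
      |groundEnergy V βn βs q1 M - groundEnergy V βn βs q2 M| ≤ |q1 - q2|) ∧
    (0 < M → ∀ q1 q2 : ℝ, 0 ≤ q1 → q1 < q2 →
      groundEnergy V βn βs q1 M < groundEnergy V βn βs q2 M) := by
  refine ⟨?_, ?_, ?_⟩
  · intro q1 q2 hq1 hle
    have h := groundEnergy_key hV hβn hβs hM0 hM1 hq1 hle
    nlinarith [mul_nonneg hM0 (sub_nonneg.mpr hle)]
  · intro q1 q2 hq1 hq2
    rcases le_total q1 q2 with hle | hle
    · have h := groundEnergy_key hV hβn hβs hM0 hM1 hq1 hle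
      have hmono : groundEnergy V βn βs q1 M ≤ groundEnergy V βn βs q2 M := by
        nlinarith [mul_nonneg hM0 (sub_nonneg.mpr hle)]
      rw [abs_of_nonpos (by linarith), abs_of_nonpos (by linarith)]
      linarith
    · have h := groundEnergy_key hV hβn hβs hM0 hM1 hq2 hle
      have hmono : groundEnergy V βn βs q2 M ≤ groundEnergy V βn βs q1 M := by
        nlinarith [mul_nonneg hM0 (sub_nonneg.mpr hle)]
      rw [abs_of_nonneg (by linarith), abs_of_nonneg (by linarith)]
      linarith
  · intro hMpos q1 q2 hq1 hlt
    have h := groundEnergy_key hV hβn hβs hM0 hM1 hq1 hlt.le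
    nlinarith [mul_pos hMpos (sub_pos.mpr hlt)]
end
end

section
/- Let f : ℝ³ → ℝ and g : ℝ³ → ℝ³ be continuous functions such that the pointwise product f·g : ℝ³ → ℝ³ is continuously differentiable. Assume: (i) there exist C > 0 and R > 0 with |f(x)| ≤ C/|x| whenever |x| ≥ R; (ii) x ↦ |g(x)| is in L²(ℝ³); and (iii) the divergence div(f·g) is Lebesgue integrable on ℝ³. Then ∫_{ℝ³} div(f·g) dx = 0. -/
open MeasureTheory Filter Set
open scoped ENNReal

noncomputable section

/-- The (classical) divergence of a vector field on `ℝ³`, as the trace of its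
Fréchet derivative. -/
def divg (F : E3 → E3) (x : E3) : ℝ :=
  LinearMap.trace ℝ E3 (fderiv ℝ F x : E3 →ₗ[ℝ] E3)

namespace Div14Aux

abbrev X3 := Fin 3 → ℝ

def σe : E3 ≃L[ℝ] X3 := EuclideanSpace.equiv (Fin 3) ℝ

lemma trace_pi (D : X3 →L[ℝ] X3) :
    LinearMap.trace ℝ X3 (D : X3 →ₗ[ℝ] X3) = ∑ i, D (Pi.single i 1) i := by
  rw [LinearMap.trace_eq_matrix_trace ℝ (Pi.basisFun ℝ (Fin 3))]
  simp [Matrix.trace, LinearMap.toMatrix_apply, Matrix.diag]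

lemma div_transfer (F : E3 → E3) (x : X3) :
    divg F (σe.symm x) = ∑ i, fderiv ℝ (fun y => σe (F (σe.symm y))) x (Pi.single i 1) i := by
  have h1 : fderiv ℝ (fun y => σe (F (σe.symm y))) x
      = (σe : E3 →L[ℝ] X3).comp ((fderiv ℝ F (σe.symm x)).comp (σe.symm : X3 →L[ℝ] E3)) := by
    have : (fun y => σe (F (σe.symm y))) = (⇑σe ∘ F) ∘ ⇑σe.symm := rfl
    rw [this, σe.symm.comp_right_fderiv, ContinuousLinearEquiv.comp_fderiv]
    rfl
  rw [divg, ← trace_pi, h1]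
  have h2 : (((σe : E3 →L[ℝ] X3).comp ((fderiv ℝ F (σe.symm x)).comp (σe.symm : X3 →L[ℝ] E3))) :
      X3 →ₗ[ℝ] X3) = σe.toLinearEquiv.conj (fderiv ℝ F (σe.symm x) : E3 →ₗ[ℝ] E3) := by
    ext y i
    simp only [ContinuousLinearMap.coe_comp, LinearEquiv.conj_apply, ContinuousLinearMap.coe_coe,
      LinearMap.coe_comp, Function.comp_apply, LinearEquiv.coe_coe,
      ContinuousLinearEquiv.coe_toLinearEquiv]
    rfl
  rw [h2, LinearMap.trace_conj']

/-- coordinate bound in Euclidean space -/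
lemma abs_coord_le_norm (v : E3) (i : Fin 3) : |σe v i| ≤ ‖v‖ := by
  rw [EuclideanSpace.norm_eq]
  have h1 : |σe v i| = Real.sqrt (‖v i‖ ^ 2) := by
    rw [Real.sqrt_sq_eq_abs, Real.norm_eq_abs, abs_abs]; rfl
  rw [h1]
  apply Real.sqrt_le_sqrt
  have := Finset.single_le_sum (f := fun j => ‖v j‖ ^ 2) (fun j _ => by positivity)
    (Finset.mem_univ i)
  simpa using this

/-- Selection lemma : an a.e.-finite-integral function on `(0,∞)` takes small values
at arbitrarily large points. -/
lemma exists_small (h : ℝ → ℝ≥0∞) (hm : Measurable h) (T : ℝ≥0∞) (hT : T ≠ ⊤)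
    (hint : ∫⁻ t in Ioi (0:ℝ), h t ≤ T) (M ε : ℝ) (hM : 0 < M) (hε : 0 < ε) :
    ∃ r, M ≤ r ∧ h r ≤ ENNReal.ofReal ε := by
  by_contra hcon
  push_neg at hcon
  set K : ℝ := T.toReal / ε + 1 with hK
  have hK0 : 0 < K := by positivity
  have h1 : ∫⁻ t in Icc M (M+K), ENNReal.ofReal ε ≤ ∫⁻ t in Icc M (M+K), h t := by
    refine setLIntegral_mono hm fun t ht => (hcon t ht.1).le
  have h2 : ∫⁻ t in Icc M (M+K), h t ≤ T := by
    refine le_trans (lintegral_mono_set ?_) hint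
    intro t ht
    exact lt_of_lt_of_le hM ht.1
  have h3 : (∫⁻ _ in Icc M (M+K), ENNReal.ofReal ε) = ENNReal.ofReal ε * ENNReal.ofReal K := by
    rw [setLIntegral_const, Real.volume_Icc, add_sub_cancel_left]
  rw [h3] at h1
  have h4 : ENNReal.ofReal ε * ENNReal.ofReal K = ENNReal.ofReal (T.toReal + ε) := by
    rw [← ENNReal.ofReal_mul hε.le]
    congr 1
    rw [hK]
    field_simp
  rw [h4] at h1
  have h5 : T < ENNReal.ofReal (T.toReal + ε) := by
    conv_lhs => rw [← ENNReal.ofReal_toReal hT]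
    exact ENNReal.ofReal_lt_ofReal_iff_of_nonneg ENNReal.toReal_nonneg |>.2 (by linarith)
  exact absurd (h1.trans h2) (not_le.2 h5)


def J (g : E3 → E3) (i : Fin 3) (t : ℝ) : ℝ≥0∞ :=
  ∫⁻ y : Fin 2 → ℝ, (‖g (σe.symm (Fin.insertNth i t y))‖₊ : ℝ≥0∞) ^ 2

lemma measurable_kernel (g : E3 → E3) (hg : Continuous g) (i : Fin 3) :
    Measurable fun p : ℝ × (Fin 2 → ℝ) =>
      (‖g (σe.symm (Fin.insertNth i p.1 p.2))‖₊ : ℝ≥0∞) ^ 2 := by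
  have h1 : Measurable fun p : ℝ × (Fin 2 → ℝ) => (Fin.insertNth i p.1 p.2 : X3) := by
    have := (MeasurableEquiv.piFinSuccAbove (fun _ : Fin 3 => ℝ) i).symm.measurable
    exact this
  have h2 : Measurable (⇑σe.symm : X3 → E3) := σe.symm.continuous.measurable
  exact ((hg.measurable.comp (h2.comp h1)).nnnorm.coe_nnreal_ennreal).pow_const 2

lemma measurable_J (g : E3 → E3) (hg : Continuous g) (i : Fin 3) : Measurable (J g i) :=
  (measurable_kernel g hg i).lintegral_prod_right'

lemma lintegral_J (g : E3 → E3) (hg : Continuous g) (i : Fin 3) :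
    ∫⁻ t, J g i t = ∫⁻ x : X3, (‖g (σe.symm x)‖₊ : ℝ≥0∞) ^ 2 := by
  have hmp : MeasurePreserving
      (MeasurableEquiv.piFinSuccAbove (fun _ : Fin 3 => ℝ) i).symm
      ((volume : Measure ℝ).prod (volume : Measure (Fin 2 → ℝ))) (volume : Measure X3) :=
    (volume_preserving_piFinSuccAbove (fun _ : Fin 3 => ℝ) i).symm _
  have key := hmp.lintegral_comp (f := fun x : X3 => (‖g (σe.symm x)‖₊ : ℝ≥0∞) ^ 2)
    ((hg.measurable.comp σe.symm.continuous.measurable).nnnorm.coe_nnreal_ennreal.pow_const 2)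
  have h1 : ∫⁻ x : X3, (‖g (σe.symm x)‖₊ : ℝ≥0∞) ^ 2
      = ∫⁻ p : ℝ × (Fin 2 → ℝ), (‖g (σe.symm (Fin.insertNth i p.1 p.2))‖₊ : ℝ≥0∞) ^ 2
        ∂((volume : Measure ℝ).prod (volume : Measure (Fin 2 → ℝ))) := by
    refine Eq.trans key.symm ?_
    congr 1
  rw [h1, lintegral_prod _ (measurable_kernel g hg i).aemeasurable]
  rfl

lemma lintegral_J_neg (g : E3 → E3) (hg : Continuous g) (i : Fin 3) :
    ∫⁻ t, J g i (-t) = ∫⁻ x : X3, (‖g (σe.symm x)‖₊ : ℝ≥0∞) ^ 2 := by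
  rw [← lintegral_J g hg i]
  exact (Measure.measurePreserving_neg (volume : Measure ℝ)).lintegral_comp
    (measurable_J g hg i)


lemma face_est (f : E3 → ℝ) (g : E3 → E3) (hf : Continuous f) (hg : Continuous g)
    (i : Fin 3) (t r C s : ℝ) (ht : |t| = r) (hr : 0 < r) (hs : 0 < s) (hC : 0 ≤ C)
    (hfb : ∀ x : E3, r ≤ ‖x‖ → |f x| ≤ C / r)
    (hJ : J g i t ≤ ENNReal.ofReal (1 / s ^ 2)) :
    |∫ y in Icc (fun _ : Fin 2 => -r) (fun _ => r),
        σe (f (σe.symm (Fin.insertNth i t y)) • g (σe.symm (Fin.insertNth i t y))) i|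
      ≤ 3 * C / s := by
  set p : (Fin 2 → ℝ) → E3 := fun y => σe.symm (Fin.insertNth i t y) with hp
  set Q : Set (Fin 2 → ℝ) := Icc (fun _ => -r) (fun _ => r) with hQ
  have hpc : Continuous p :=
    σe.symm.continuous.comp (Continuous.finInsertNth i continuous_const continuous_id)
  -- norm of p y is at least r
  have hpge : ∀ y, r ≤ ‖p y‖ := by
    intro y
    have h1 : σe (p y) i = t := by
      simp [hp, σe, Fin.insertNth_apply_same]
    have := abs_coord_le_norm (p y) i
    rw [h1, ht] at this
    exact this
  -- pointwise bound on the coordinate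
  have hptwise : ∀ y, |σe (f (p y) • g (p y)) i| ≤ (C / r) * ‖g (p y)‖ := by
    intro y
    refine (abs_coord_le_norm _ i).trans ?_
    rw [norm_smul, Real.norm_eq_abs]
    exact mul_le_mul_of_nonneg_right (hfb _ (hpge y)) (norm_nonneg _)
  -- integrability facts on Q
  have hQc : IsCompact Q := isCompact_Icc
  have hQm : MeasurableSet Q := measurableSet_Icc
  have hI1 : IntegrableOn (fun y => σe (f (p y) • g (p y)) i) Q := by
    have hc : Continuous fun y => σe (f (p y) • g (p y)) i :=
      (continuous_apply i).comp (σe.continuous.comp ((hf.comp hpc).smul (hg.comp hpc)))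
    exact hc.locallyIntegrable.integrableOn_isCompact hQc
  have hIg : IntegrableOn (fun y => ‖g (p y)‖) Q :=
    (hg.comp hpc).norm.locallyIntegrable.integrableOn_isCompact hQc
  have hIg2 : IntegrableOn (fun y => ‖g (p y)‖ ^ 2) Q :=
    ((hg.comp hpc).norm.pow 2).locallyIntegrable.integrableOn_isCompact hQc
  have hδconst : ∀ c : ℝ, IntegrableOn (fun _ => c) Q := fun c =>
    integrableOn_const (hQc.measure_lt_top.ne)
  -- step 1 : |∫| ≤ (C/r) ∫ ‖g∘p‖
  have step1 : |∫ y in Q, σe (f (p y) • g (p y)) i| ≤ (C / r) * ∫ y in Q, ‖g (p y)‖ := by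
    have h := norm_integral_le_integral_norm (μ := volume.restrict Q)
      (fun y => σe (f (p y) • g (p y)) i)
    simp only [Real.norm_eq_abs] at h
    calc |∫ y in Q, σe (f (p y) • g (p y)) i|
        ≤ ∫ y in Q, |σe (f (p y) • g (p y)) i| := h
      _ ≤ ∫ y in Q, (C / r) * ‖g (p y)‖ :=
          setIntegral_mono_on hI1.abs (hIg.const_mul _) hQm fun y _ => hptwise y
      _ = (C / r) * ∫ y in Q, ‖g (p y)‖ := by rw [integral_const_mul]
  -- AM-GM with δ = 1/(r*s)
  set δ : ℝ := 1 / (r * s) with hδ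
  have hδ0 : 0 < δ := by positivity
  have amgm : ∀ y, ‖g (p y)‖ ≤ (δ + ‖g (p y)‖ ^ 2 / δ) / 2 := by
    intro y
    set a : ℝ := ‖g (p y)‖
    have key : (δ + a ^ 2 / δ) / 2 - a = (a - δ) ^ 2 / (2 * δ) := by
      field_simp
      ring
    have : 0 ≤ (a - δ) ^ 2 / (2 * δ) := by positivity
    linarith [key ▸ this]
  -- volume of Q
  have hle : (fun _ : Fin 2 => -r) ≤ (fun _ : Fin 2 => r) := fun j => by dsimp; linarith
  have hvolQ : (volume Q).toReal = (2 * r) ^ 2 := by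
    rw [hQ, Real.volume_Icc_pi_toReal hle]
    simp [Finset.prod_const]
    ring
  -- step 2 : ∫ ‖g∘p‖ ≤ (δ * (2r)^2 + (∫ ‖g∘p‖²)/δ)/2
  have step2 : ∫ y in Q, ‖g (p y)‖ ≤ (δ * (2*r)^2 + (∫ y in Q, ‖g (p y)‖ ^ 2) / δ) / 2 := by
    calc ∫ y in Q, ‖g (p y)‖ ≤ ∫ y in Q, (δ + ‖g (p y)‖ ^ 2 / δ) / 2 := by
          refine setIntegral_mono_on hIg ?_ hQm fun y _ => amgm y
          exact ((hδconst δ).add (hIg2.div_const δ)).div_const 2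
      _ = ((volume Q).toReal * δ + (∫ y in Q, ‖g (p y)‖ ^ 2) / δ) / 2 := by
          rw [integral_div, integral_add (hδconst δ) (hIg2.div_const δ),
            setIntegral_const, integral_div, smul_eq_mul, measureReal_def]
      _ = (δ * (2*r)^2 + (∫ y in Q, ‖g (p y)‖ ^ 2) / δ) / 2 := by rw [hvolQ]; ring_nf
  -- step 3 : ∫ ‖g∘p‖² ≤ 1/s²
  have step3 : ∫ y in Q, ‖g (p y)‖ ^ 2 ≤ 1 / s ^ 2 := by
    have e1 : ∫ y in Q, ‖g (p y)‖ ^ 2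
        = (∫⁻ y in Q, ENNReal.ofReal (‖g (p y)‖ ^ 2)).toReal := by
      rw [integral_eq_lintegral_of_nonneg_ae (f := fun y => ‖g (p y)‖ ^ 2)
        (Eventually.of_forall fun y => by positivity)
        (((hg.comp hpc).norm.pow 2).aestronglyMeasurable :
          AEStronglyMeasurable (fun y => ‖g (p y)‖ ^ 2) (volume.restrict Q))]
    have e2 : ∫⁻ y in Q, ENNReal.ofReal (‖g (p y)‖ ^ 2) ≤ J g i t := by
      refine le_trans (setLIntegral_le_lintegral _ _) (le_of_eq ?_)
      rw [J]
      congr 1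
      ext y
      rw [ENNReal.ofReal_pow (norm_nonneg _), ofReal_norm, enorm_eq_nnnorm]
    rw [e1]
    exact ENNReal.toReal_le_of_le_ofReal (by positivity) (e2.trans hJ)
  -- combine
  have hfin : (C / r) * ((δ * (2*r)^2 + (1/s^2) / δ) / 2) = 5 * C / (2 * s) := by
    rw [hδ]
    field_simp
    ring
  have hCr : 0 ≤ C / r := by positivity
  calc |∫ y in Q, σe (f (p y) • g (p y)) i| ≤ (C / r) * ∫ y in Q, ‖g (p y)‖ := step1
    _ ≤ (C / r) * ((δ * (2*r)^2 + (∫ y in Q, ‖g (p y)‖ ^ 2) / δ) / 2) :=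
        mul_le_mul_of_nonneg_left step2 hCr
    _ ≤ (C / r) * ((δ * (2*r)^2 + (1/s^2) / δ) / 2) := by
        refine mul_le_mul_of_nonneg_left ?_ hCr
        gcongr
    _ = 5 * C / (2 * s) := hfin
    _ ≤ 3 * C / s := by
        rw [div_le_div_iff₀ (by positivity) hs]
        nlinarith [mul_nonneg hC hs.le]

lemma sqrt_succ_tendsto : Tendsto (fun n : ℕ => Real.sqrt ((n : ℝ) + 1)) atTop atTop := by
  refine Filter.tendsto_atTop_atTop_of_monotone ?_ ?_
  · intro m n hmn
    have : (m : ℝ) ≤ (n : ℝ) := Nat.cast_le.2 hmn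
    exact Real.sqrt_le_sqrt (by linarith)
  · intro b
    obtain ⟨n, hn⟩ := exists_nat_ge (b ^ 2)
    refine ⟨n, ?_⟩
    have h1 : b ^ 2 ≤ (n : ℝ) + 1 := by linarith
    calc b ≤ |b| := le_abs_self b
      _ = Real.sqrt (b ^ 2) := (Real.sqrt_sq_eq_abs b).symm
      _ ≤ Real.sqrt ((n : ℝ) + 1) := Real.sqrt_le_sqrt h1

/-- the product field, on the pi-type model -/
def Gv (f : E3 → ℝ) (g : E3 → E3) : X3 → X3 :=
  fun x => σe (f (σe.symm x) • g (σe.symm x))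

/-- the divergence, on the pi-type model -/
def DGv (f : E3 → ℝ) (g : E3 → E3) : X3 → ℝ :=
  fun x => ∑ i, fderiv ℝ (Gv f g) x (Pi.single i 1) i

lemma DGv_eq (f : E3 → ℝ) (g : E3 → E3) (x : X3) :
    divg (fun y => f y • g y) (σe.symm x) = DGv f g x :=
  div_transfer (fun y => f y • g y) x

lemma boxthm (f : E3 → ℝ) (g : E3 → E3) (hfg : ContDiff ℝ 1 (fun x => f x • g x))
    (hDGint : Integrable (DGv f g)) (ρ : ℝ) (hρ : 0 < ρ) :
    ∫ x in Icc (fun _ : Fin 3 => -ρ) (fun _ => ρ), DGv f g x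
      = ∑ i : Fin 3,
          ((∫ y in Icc (fun _ : Fin 2 => -ρ) (fun _ => ρ),
              σe (f (σe.symm (Fin.insertNth i ρ y)) • g (σe.symm (Fin.insertNth i ρ y))) i)
            - ∫ y in Icc (fun _ : Fin 2 => -ρ) (fun _ => ρ),
              σe (f (σe.symm (Fin.insertNth i (-ρ) y)) • g (σe.symm (Fin.insertNth i (-ρ) y))) i) := by
  have hGc1 : ContDiff ℝ 1 (Gv f g) :=
    ((σe : E3 →L[ℝ] X3).contDiff.comp hfg).comp ((σe.symm : X3 →L[ℝ] E3).contDiff)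
  have hGd : Differentiable ℝ (Gv f g) := hGc1.differentiable one_ne_zero
  have hle : (fun _ : Fin 3 => -ρ) ≤ fun _ => ρ := fun j => by dsimp; linarith
  exact MeasureTheory.integral_divergence_of_hasFDerivAt_off_countable
    (n := 2) (fun _ => -ρ) (fun _ => ρ) hle (Gv f g) (fun x => fderiv ℝ (Gv f g) x) ∅
    Set.countable_empty hGc1.continuous.continuousOn
    (fun x _ => (hGd x).hasFDerivAt) hDGint.integrableOn

end Div14Aux

open Div14Aux

/-- if `f` decays like `1/|x|`, `|g| ∈ L²`, and `div(f·g) ∈ L¹`,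
then `∫ div(f·g) = 0`. -/
theorem integral_div_eq_zero (f : E3 → ℝ) (g : E3 → E3)
    (hf : Continuous f) (hg : Continuous g)
    (hfg : ContDiff ℝ 1 (fun x => f x • g x))
    (hdecay : ∃ C : ℝ, 0 < C ∧ ∃ R : ℝ, 0 < R ∧ ∀ x : E3, R ≤ ‖x‖ → |f x| ≤ C / ‖x‖)
    (hgL2 : Integrable (fun x => ‖g x‖ ^ 2))
    (hdiv : Integrable (fun x => divg (fun y => f y • g y) x)) :
    ∫ x : E3, divg (fun y => f y • g y) x = 0 := by
  classical
  obtain ⟨C, hC, R, hR, hdec⟩ := hdecay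
  have mps : MeasurePreserving (⇑(MeasurableEquiv.toLp 2 (Fin 3 → ℝ)))
      (volume : Measure X3) (volume : Measure E3) :=
    (EuclideanSpace.volume_preserving_symm_measurableEquiv_toLp (Fin 3)).symm _
  have hcoe : ⇑(MeasurableEquiv.toLp 2 (Fin 3 → ℝ)) = ⇑(σe.symm) := rfl
  -- integrability of the divergence on the pi model
  have hDGint : Integrable (DGv f g) := by
    have h1 : Integrable (fun x : X3 => divg (fun y => f y • g y) (σe.symm x)) := by
      rw [← hcoe]
      exact (mps.integrable_comp_emb (MeasurableEquiv.measurableEmbedding _)).2 hdiv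
    exact h1.congr (Eventually.of_forall fun x => DGv_eq f g x)
  -- the integral transfers
  have hIeq : ∫ x : E3, divg (fun y => f y • g y) x = ∫ x : X3, DGv f g x := by
    rw [← mps.integral_comp (MeasurableEquiv.measurableEmbedding _)
      (fun y => divg (fun z => f z • g z) y)]
    exact integral_congr_ae (Eventually.of_forall fun x => DGv_eq f g x)
  -- L² mass, transferred
  have hTne : (∫⁻ x : X3, (‖g (σe.symm x)‖₊ : ℝ≥0∞) ^ 2) ≠ ⊤ := by
    have h3 : (∫⁻ x : X3, (‖g (σe.symm x)‖₊ : ℝ≥0∞) ^ 2)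
        = ∫⁻ y : E3, (‖g y‖₊ : ℝ≥0∞) ^ 2 := by
      rw [← hcoe]
      exact mps.lintegral_comp (hg.measurable.nnnorm.coe_nnreal_ennreal.pow_const 2)
    rw [h3]
    have h1 := hgL2.2
    rw [HasFiniteIntegral] at h1
    have h2 : ∀ x : E3, (‖‖g x‖ ^ 2‖ₑ : ℝ≥0∞) = (‖g x‖₊ : ℝ≥0∞) ^ 2 := fun x => by
      rw [enorm_pow, enorm_eq_nnnorm, nnnorm_norm]
    simp_rw [h2] at h1
    exact h1.ne
  -- combined slice function
  set hfn : ℝ → ℝ≥0∞ := fun t => ∑ i : Fin 3, (J g i t + J g i (-t)) with hhfn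
  have hfnm : Measurable hfn := by
    refine Finset.measurable_sum _ fun i _ => ?_
    exact (measurable_J g hg i).add ((measurable_J g hg i).comp measurable_neg)
  have hintfn : ∫⁻ t, hfn t ≠ ⊤ := by
    rw [hhfn, lintegral_finset_sum (f := fun i t => J g i t + J g i (-t)) _
      (fun i _ => ((measurable_J g hg i).add ((measurable_J g hg i).comp measurable_neg) :
        Measurable fun t => J g i t + J g i (-t)))]
    refine ENNReal.sum_ne_top.2 fun i _ => ?_
    rw [lintegral_add_left (measurable_J g hg i), lintegral_J g hg i, lintegral_J_neg g hg i]
    exact ENNReal.add_ne_top.2 ⟨hTne, hTne⟩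
  -- choice of good radii
  have hsel : ∀ n : ℕ, ∃ ρ, max R ((n : ℝ) + 1) ≤ ρ ∧
      hfn ρ ≤ ENNReal.ofReal (1 / ((n : ℝ) + 1)) := by
    intro n
    exact exists_small hfn hfnm _ hintfn (setLIntegral_le_lintegral _ _)
      (max R ((n : ℝ) + 1)) (1 / ((n : ℝ) + 1)) (lt_max_of_lt_left hR) (by positivity)
  choose r hrge hrsm using hsel
  have hrpos : ∀ n : ℕ, 0 < r n := fun n => lt_of_lt_of_le (lt_max_of_lt_left hR) (hrge n)
  have hrR : ∀ n : ℕ, R ≤ r n := fun n => (le_max_left _ _).trans (hrge n)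
  have hrn : ∀ n : ℕ, (n : ℝ) + 1 ≤ r n := fun n => (le_max_right _ _).trans (hrge n)
  -- face bound
  have hface : ∀ n : ℕ, |∫ x in Icc (fun _ : Fin 3 => -(r n)) (fun _ => r n), DGv f g x|
      ≤ 18 * C / Real.sqrt ((n : ℝ) + 1) := by
    intro n
    set s : ℝ := Real.sqrt ((n : ℝ) + 1) with hsdef
    have hs0 : 0 < s := Real.sqrt_pos.2 (by positivity)
    have hs2 : s ^ 2 = (n : ℝ) + 1 := Real.sq_sqrt (by positivity)
    have hfb : ∀ x : E3, r n ≤ ‖x‖ → |f x| ≤ C / r n := by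
      intro x hx
      refine (hdec x ((hrR n).trans hx)).trans ?_
      gcongr
      · exact hrpos n
    have hofr : ENNReal.ofReal (1 / ((n : ℝ) + 1)) = ENNReal.ofReal (1 / s ^ 2) := by
      rw [hs2]
    have hJ1 : ∀ i : Fin 3, J g i (r n) ≤ ENNReal.ofReal (1 / s ^ 2) := by
      intro i
      rw [← hofr]
      refine le_trans ?_ (hrsm n)
      calc J g i (r n) ≤ J g i (r n) + J g i (-(r n)) := le_self_add
        _ ≤ ∑ j : Fin 3, (J g j (r n) + J g j (-(r n))) :=
            Finset.single_le_sum (f := fun j => J g j (r n) + J g j (-(r n)))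
              (fun j _ => zero_le) (Finset.mem_univ i)
    have hJ2 : ∀ i : Fin 3, J g i (-(r n)) ≤ ENNReal.ofReal (1 / s ^ 2) := by
      intro i
      rw [← hofr]
      refine le_trans ?_ (hrsm n)
      calc J g i (-(r n)) ≤ J g i (r n) + J g i (-(r n)) := le_add_self
        _ ≤ ∑ j : Fin 3, (J g j (r n) + J g j (-(r n))) :=
            Finset.single_le_sum (f := fun j => J g j (r n) + J g j (-(r n)))
              (fun j _ => zero_le) (Finset.mem_univ i)
    rw [boxthm f g hfg hDGint (r n) (hrpos n)]
    refine le_trans (Finset.abs_sum_le_sum_abs _ _) ?_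
    have hbd : ∀ i : Fin 3,
        |(∫ y in Icc (fun _ : Fin 2 => -(r n)) (fun _ => r n),
            σe (f (σe.symm (Fin.insertNth i (r n) y)) • g (σe.symm (Fin.insertNth i (r n) y))) i)
          - ∫ y in Icc (fun _ : Fin 2 => -(r n)) (fun _ => r n),
            σe (f (σe.symm (Fin.insertNth i (-(r n)) y)) • g (σe.symm (Fin.insertNth i (-(r n)) y))) i|
        ≤ 3 * C / s + 3 * C / s := by
      intro i
      refine (abs_sub _ _).trans ?_
      have e1 := face_est f g hf hg i (r n) (r n) C s (abs_of_pos (hrpos n)) (hrpos n)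
        hs0 hC.le hfb (hJ1 i)
      have e2 := face_est f g hf hg i (-(r n)) (r n) C s
        (by rw [abs_neg]; exact abs_of_pos (hrpos n)) (hrpos n) hs0 hC.le hfb (hJ2 i)
      exact add_le_add e1 e2
    calc ∑ i : Fin 3, |_| ≤ ∑ _i : Fin 3, (3 * C / s + 3 * C / s) :=
          Finset.sum_le_sum fun i _ => hbd i
      _ = 18 * C / s := by
          rw [Finset.sum_const]
          simp
          ring
  -- limit of box integrals equals the full integral
  have hlim1 : Tendsto (fun n : ℕ => ∫ x in Icc (fun _ : Fin 3 => -(r n)) (fun _ => r n), DGv f g x)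
      atTop (nhds (∫ x : X3, DGv f g x)) := by
    have key := tendsto_integral_of_dominated_convergence (μ := (volume : Measure X3))
      (F := fun n x => (Icc (fun _ : Fin 3 => -(r n)) (fun _ => r n)).indicator (DGv f g) x)
      (f := DGv f g) (bound := fun x => ‖DGv f g x‖)
      (fun n => hDGint.aestronglyMeasurable.indicator measurableSet_Icc)
      hDGint.norm
      (fun n => Eventually.of_forall fun x => norm_indicator_le_norm_self _ _)
      (Eventually.of_forall fun x => ?_)
    · refine key.congr fun n => ?_
      rw [integral_indicator measurableSet_Icc]
    · -- pointwise convergence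
      obtain ⟨N, hN⟩ := exists_nat_ge ‖x‖
      refine tendsto_const_nhds.congr' ?_
      filter_upwards [eventually_ge_atTop N] with n hn
      have hx : x ∈ Icc (fun _ : Fin 3 => -(r n)) (fun _ => r n) := by
        constructor <;> intro j
        · have h1 : ‖x j‖ ≤ ‖x‖ := norm_le_pi_norm x j
          have h2 : (N : ℝ) ≤ (n : ℝ) := Nat.cast_le.2 hn
          have h3 : |x j| ≤ ‖x‖ := h1
          dsimp
          have := (hrn n)
          nlinarith [abs_le.1 h3]
        · have h1 : ‖x j‖ ≤ ‖x‖ := norm_le_pi_norm x j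
          have h2 : (N : ℝ) ≤ (n : ℝ) := Nat.cast_le.2 hn
          have h3 : |x j| ≤ ‖x‖ := h1
          dsimp
          have := (hrn n)
          nlinarith [abs_le.1 h3]
      rw [Set.indicator_of_mem hx]
  -- bound tendsto 0
  have hlim0 : Tendsto (fun n : ℕ => 18 * C / Real.sqrt ((n : ℝ) + 1)) atTop (nhds 0) := by
    have h1 : Tendsto (fun n : ℕ => (Real.sqrt ((n : ℝ) + 1))⁻¹) atTop (nhds 0) :=
      sqrt_succ_tendsto.inv_tendsto_atTop
    have h2 := h1.const_mul (18 * C)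
    rw [mul_zero] at h2
    refine h2.congr fun n => ?_
    rw [div_eq_mul_inv]
  -- box integrals tend to 0
  have hlim2 : Tendsto (fun n : ℕ => ∫ x in Icc (fun _ : Fin 3 => -(r n)) (fun _ => r n), DGv f g x)
      atTop (nhds 0) := by
    refine squeeze_zero_norm (fun n => ?_) hlim0
    simpa [Real.norm_eq_abs] using hface n
  rw [hIeq]
  exact tendsto_nhds_unique hlim1 hlim2
end
end
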